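/- The functions H1 = z/u, H2 = y/z, H3 = (y² + z² - u² - x²/4)/u, and H4 = (y² + z² - u² - x²/4)/y are first integrals of the generalized Raychaudhuri system ẋ = -((1/2)x² + 2(y² + z² - u²)), ẏ = -xy, ż = -xz, u̇ = -xu, on the open sets where their denominators are nonzero. -/

import Mathlib

/-- H₁ = z/u, H₂ = y/z, H₃ = (y² + z² - u² - x²/4)/u and
H₄ = (y² + z² - u² - x²/4)/y are first integrals of the generalized
Raychaudhuri system ẋ = -((1/2)x² + 2(y² + z² - u²)), ẏ = -xy, ż = -xz,
u̇ = -xu, wherever the respective denominators are nonzero. -/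
theorem raychaudhuri_first_integrals
    (x y z u : ℝ → ℝ)
    (hx : ∀ t, HasDerivAt x (-((1 / 2) * (x t) ^ 2 +
      2 * ((y t) ^ 2 + (z t) ^ 2 - (u t) ^ 2))) t)
    (hy : ∀ t, HasDerivAt y (-(x t * y t)) t)
    (hz : ∀ t, HasDerivAt z (-(x t * z t)) t)
    (hu : ∀ t, HasDerivAt u (-(x t * u t)) t) :
    (∀ t, u t ≠ 0 → HasDerivAt (fun t => z t / u t) 0 t) ∧
    (∀ t, z t ≠ 0 → HasDerivAt (fun t => y t / z t) 0 t) ∧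
    (∀ t, u t ≠ 0 → HasDerivAt (fun t =>
      ((y t) ^ 2 + (z t) ^ 2 - (u t) ^ 2 - (x t) ^ 2 / 4) / u t) 0 t) ∧
    (∀ t, y t ≠ 0 → HasDerivAt (fun t =>
      ((y t) ^ 2 + (z t) ^ 2 - (u t) ^ 2 - (x t) ^ 2 / 4) / y t) 0 t) := by
  have num : ∀ t, HasDerivAt (fun t => (y t) ^ 2 + (z t) ^ 2 - (u t) ^ 2 - (x t) ^ 2 / 4)
      (-(2 * x t * ((y t)^2 + (z t)^2 - (u t)^2)) - x t *
        (-((1 / 2) * (x t) ^ 2 + 2 * ((y t) ^ 2 + (z t) ^ 2 - (u t) ^ 2))) / 2) t := by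
    intro t
    have := ((((hy t).pow 2).add ((hz t).pow 2)).sub ((hu t).pow 2)).sub
      (((hx t).pow 2).div_const 4)
    refine this.congr_deriv ?_
    ring
  refine ⟨fun t ht => ?_, fun t ht => ?_, fun t ht => ?_, fun t ht => ?_⟩
  · have := (hz t).div (hu t) ht
    refine this.congr_deriv ?_
    field_simp
    ring
  · have := (hy t).div (hz t) ht
    refine this.congr_deriv ?_
    field_simp
    ring
  · have := (num t).div (hu t) ht
    refine this.congr_deriv ?_
    field_simp
    ring
  · have := (num t).div (hy t) ht
    refine this.congr_deriv ?_
    field_simp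
    ring
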